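/- Let (X,μ) be a probability space and A ∈ M(m×m, L^∞(X,ℤ)) a matrix over the ring of bounded measurable integer-valued functions. Suppose AA* is diagonalized (by a unitary over L^∞(X)) with nonnegative diagonal entries f₁,…,f_m ∈ L^∞(X). Then for almost every x, the product ∏_{i: f_i(x)>0} f_i(x) equals the product of the positive eigenvalues of the integer matrix A(x)A(x)*, which is an integer ≥ 1; hence ∫_X ln(∏_{i: f_i(x)>0} f_i(x)) dμ(x) ≥ 0. -/
import Mathlib


open MeasureTheory Finset Matrix
open scoped Classical

section Stmt15Aux
open Polynomial

lemma stmt15_charpoly_conj {m : ℕ} (U V M : Matrix (Fin m) (Fin m) ℝ) (hUV : U * V = 1) :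
    (U * M * V).charpoly = M.charpoly := by
  unfold Matrix.charpoly
  have hcomm : ∀ N : Matrix (Fin m) (Fin m) ℝ[X],
      Matrix.scalar (Fin m) (X : ℝ[X]) * N = N * Matrix.scalar (Fin m) (X : ℝ[X]) := by
    intro N
    rw [scalar_commute]
    intro r; exact Commute.all _ _
  have key : charmatrix (U * M * V)
      = (C : ℝ →+* ℝ[X]).mapMatrix U * charmatrix M * (C : ℝ →+* ℝ[X]).mapMatrix V := by
    unfold charmatrix
    rw [mul_sub, sub_mul, RingHom.map_mul, RingHom.map_mul]
    congr 1
    rw [← hcomm, mul_assoc, ← RingHom.map_mul, hUV, RingHom.map_one, mul_one]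
  rw [key, det_mul, det_mul, mul_comm, ← mul_assoc, ← det_mul, ← RingHom.map_mul,
    mul_eq_one_comm.mp hUV, RingHom.map_one, det_one, one_mul]

lemma stmt15_charpoly_diagonal {m : ℕ} (d : Fin m → ℝ) :
    (Matrix.diagonal d).charpoly = ∏ i, (X - C (d i)) := by
  unfold Matrix.charpoly charmatrix
  have : Matrix.scalar (Fin m) (X : ℝ[X]) - (C : ℝ →+* ℝ[X]).mapMatrix (diagonal d)
      = diagonal (fun i => X - C (d i)) := by
    rw [RingHom.mapMatrix_apply, diagonal_map (map_zero _),
      show Matrix.scalar (Fin m) (X : ℝ[X]) = diagonal (fun _ => X) from rfl, diagonal_sub]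
  rw [this, det_diagonal]

lemma stmt15_key {m : ℕ} (M : Matrix (Fin m) (Fin m) ℤ)
    (hM : (M.map (Int.cast : ℤ → ℝ)).IsHermitian)
    (hnn : ∀ j, 0 ≤ hM.eigenvalues j) :
    ∃ k : ℤ, 1 ≤ k ∧
      (∏ j ∈ Finset.univ.filter fun j => 0 < hM.eigenvalues j, hM.eigenvalues j) = (k : ℝ) := by
  set lam := hM.eigenvalues with hlam
  set U : Matrix (Fin m) (Fin m) ℝ := (hM.eigenvectorUnitary : Matrix (Fin m) (Fin m) ℝ)
  have hspec : M.map (Int.cast : ℤ → ℝ) = U * diagonal (RCLike.ofReal ∘ lam) * star U :=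
    hM.spectral_theorem
  have hUV : U * star U = 1 := Matrix.mem_unitaryGroup_iff.mp (hM.eigenvectorUnitary).2
  have hdiag : diagonal (RCLike.ofReal ∘ lam) = diagonal lam := by
    congr 1
  -- charpoly of M.map cast equals product of (X - C lam j)
  have hchar : (M.map (Int.cast : ℤ → ℝ)).charpoly = ∏ j, (X - C (lam j)) := by
    rw [hspec, hdiag, stmt15_charpoly_conj _ _ _ hUV, stmt15_charpoly_diagonal]
  set P : Finset (Fin m) := Finset.univ.filter fun j => 0 < lam j with hP
  set N : Finset (Fin m) := Finset.univ.filter fun j => ¬ 0 < lam j with hN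
  have hzero : ∀ j ∈ N, lam j = 0 := by
    intro j hj
    rw [hN, Finset.mem_filter] at hj
    exact le_antisymm (not_lt.mp hj.2) (hnn j)
  have hsplitted : (∏ j, (X - C (lam j))) = (∏ j ∈ P, (X - C (lam j))) * X ^ N.card := by
    rw [← Finset.prod_filter_mul_prod_filter_not Finset.univ (fun j => 0 < lam j)]
    congr 1
    rw [Finset.prod_congr rfl (fun j hj => by rw [hzero j hj, map_zero, sub_zero]),
      Finset.prod_const]
  -- the coefficient
  have hcoeff : (M.map (Int.cast : ℤ → ℝ)).charpoly.coeff N.card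
      = (-1) ^ P.card * ∏ j ∈ P, lam j := by
    rw [hchar, hsplitted]
    have h0 := Polynomial.coeff_mul_X_pow (∏ j ∈ P, (X - C (lam j))) N.card 0
    rw [zero_add] at h0
    rw [h0, Polynomial.coeff_zero_eq_eval_zero, Polynomial.eval_prod]
    simp only [Polynomial.eval_sub, Polynomial.eval_X, Polynomial.eval_C, zero_sub]
    rw [show (∏ j ∈ P, -lam j) = ∏ j ∈ P, (-1) * lam j from by simp,
      Finset.prod_mul_distrib, Finset.prod_const]
  have hcast : (M.map (Int.cast : ℤ → ℝ)).charpoly.coeff N.card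
      = ((M.charpoly.coeff N.card : ℤ) : ℝ) := by
    rw [show (Int.cast : ℤ → ℝ) = ⇑(Int.castRingHom ℝ) from rfl, Matrix.charpoly_map,
      Polynomial.coeff_map]

  have hprodpos : 0 < ∏ j ∈ P, lam j := by
    apply Finset.prod_pos
    intro j hj
    rw [hP, Finset.mem_filter] at hj
    exact hj.2
  refine ⟨(-1) ^ P.card * M.charpoly.coeff N.card, ?_, ?_⟩
  · have h1 : (((-1) ^ P.card * M.charpoly.coeff N.card : ℤ) : ℝ) = ∏ j ∈ P, lam j := by
      push_cast
      rw [← hcast, hcoeff, ← mul_assoc, ← mul_pow]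
      simp
    have : (0 : ℝ) < (((-1) ^ P.card * M.charpoly.coeff N.card : ℤ) : ℝ) := h1 ▸ hprodpos
    exact_mod_cast this
  · push_cast
    rw [← hcast, hcoeff, ← mul_assoc, ← mul_pow]
    simp

open MeasureTheory

end Stmt15Aux

/-- Let `(X,μ)` be a probability space and `A` a measurable family of
`m × m` integer matrices (a matrix over `L^∞(X,ℤ)`).  Suppose `AA*` is diagonalized over
`L^∞(X)` with nonnegative diagonal entries `f₁, …, f_m`, i.e. for a.e. `x` the numbers
`f i x` are (up to permutation) the eigenvalues of `A(x)A(x)*`.  Then for a.e. `x` the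
product `∏_{i : f i x > 0} f i x` is an integer `≥ 1`, and hence
`∫ ln (∏_{i : f i x > 0} f i x) dμ ≥ 0`. -/
theorem stmt_15 {X : Type*} [MeasurableSpace X] (μ : Measure X) [IsProbabilityMeasure μ]
    {m : ℕ} (A : X → Matrix (Fin m) (Fin m) ℤ)
    (hH : ∀ x, ((A x * (A x)ᵀ).map (Int.cast : ℤ → ℝ)).IsHermitian)
    (f : Fin m → X → ℝ)
    (hfmeas : ∀ i, Measurable (f i))
    (hf0 : ∀ i, ∀ᵐ x ∂μ, 0 ≤ f i x)
    (heig : ∀ᵐ x ∂μ, ∃ σ : Equiv.Perm (Fin m), ∀ i, f i x = (hH x).eigenvalues (σ i)) :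
    (∀ᵐ x ∂μ, ∃ k : ℤ, 1 ≤ k ∧
      (∏ i ∈ Finset.univ.filter fun i => 0 < f i x, f i x) = (k : ℝ)) ∧
    0 ≤ ∫ x, Real.log (∏ i ∈ Finset.univ.filter fun i => 0 < f i x, f i x) ∂μ := by

  -- eigenvalues are nonnegative pointwise, since A Aᵀ is positive semidefinite
  have hPSD : ∀ x, ((A x * (A x)ᵀ).map (Int.cast : ℤ → ℝ)).PosSemidef := by
    intro x
    have hmap : ((A x * (A x)ᵀ).map (Int.cast : ℤ → ℝ))
        = ((A x).map (Int.cast : ℤ → ℝ)) * ((A x).map (Int.cast : ℤ → ℝ))ᴴ := by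
      rw [show (Int.cast : ℤ → ℝ) = ⇑(Int.castRingHom ℝ) from rfl, Matrix.map_mul,
        Matrix.conjTranspose_eq_transpose_of_trivial, Matrix.transpose_map]
    rw [hmap]
    exact Matrix.posSemidef_self_mul_conjTranspose _
  have hnn : ∀ x j, 0 ≤ (hH x).eigenvalues j := fun x j =>
    (hPSD x).eigenvalues_nonneg j
  -- the a.e. statement
  have hAE : ∀ᵐ x ∂μ, ∃ k : ℤ, 1 ≤ k ∧
      (∏ i ∈ Finset.univ.filter fun i => 0 < f i x, f i x) = (k : ℝ) := by
    filter_upwards [heig] with x ⟨σ, hσ⟩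
    obtain ⟨k, hk1, hk2⟩ := stmt15_key (A x * (A x)ᵀ) (hH x) (hnn x)
    refine ⟨k, hk1, ?_⟩
    rw [← hk2]
    set lam := (hH x).eigenvalues
    calc (∏ i ∈ Finset.univ.filter fun i => 0 < f i x, f i x)
        = ∏ i, if 0 < f i x then f i x else 1 := Finset.prod_filter _ _
      _ = ∏ i, if 0 < lam (σ i) then lam (σ i) else 1 := by
          refine Finset.prod_congr rfl fun i _ => ?_
          rw [hσ i]
      _ = ∏ j, if 0 < lam j then lam j else 1 :=
          Equiv.prod_comp σ (fun j => if 0 < lam j then lam j else 1)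
      _ = ∏ j ∈ Finset.univ.filter fun j => 0 < lam j, lam j := (Finset.prod_filter _ _).symm
  refine ⟨hAE, ?_⟩
  apply integral_nonneg_of_ae
  filter_upwards [hAE] with x ⟨k, hk1, hk2⟩
  have h1 : (1 : ℝ) ≤ ∏ i ∈ Finset.univ.filter fun i => 0 < f i x, f i x := by
    rw [hk2]; exact_mod_cast hk1
  exact Real.log_nonneg h1
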